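/- Let G be a connected graph with a set V^∞ ⊆ V(G) of undeletable vertices and a set T_b ⊆ V(G) of border terminals, and let q and k be nonnegative integers. If G contains neither a (q, k)-good node separation nor a (q, k)-flower separation with regard to T_b, then for every Z ⊆ V(G) \ V^∞ with |Z| ≤ k, the graph G − Z contains at most (2q + 2)(2^k − 1) + |T_b| + 1 connected components containing a vertex of V(G) \ V^∞, out of which at most one has more than q vertices not in V^∞. -/

import Mathlib

/-- A multigraph on vertex type `V` with edge type `E`: each edge has an
unordered pair of endpoints. -/
structure Multigraph (V : Type*) (E : Type*) where
  ends : E → Sym2 V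

namespace Multigraph

variable {V E : Type*}

/-- The multigraph has no self-loops. -/
def Loopless (G : Multigraph V E) : Prop := ∀ e : E, ¬ (G.ends e).IsDiag

/-- Two vertices are adjacent if some edge joins them. -/
def Adj (G : Multigraph V E) (a b : V) : Prop := ∃ e : E, G.ends e = s(a, b)

/-- The (open) neighbourhood of a vertex. -/
def nbhd (G : Multigraph V E) (v : V) : Set V := {u | G.Adj v u}

/-- The neighbourhood `N_G(D)` of a set of vertices. -/
def setNbhd (G : Multigraph V E) (D : Set V) : Set V :=
  {u | u ∉ D ∧ ∃ d ∈ D, G.Adj u d}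

/-- One step along an edge of `G − (X, F)`. -/
def Step (G : Multigraph V E) (X : Set V) (F : Set E) (a b : V) : Prop :=
  a ∉ X ∧ b ∉ X ∧ ∃ e : E, e ∉ F ∧ G.ends e = s(a, b)

/-- `u` and `v` lie in the same connected component of `G − (X, F)`. -/
def Conn (G : Multigraph V E) (X : Set V) (F : Set E) (u v : V) : Prop :=
  u ∉ X ∧ v ∉ X ∧ Relation.ReflTransGen (G.Step X F) u v

end Multigraph

/-- `R` is an equivalence relation on the set `T` (and vanishes outside `T`). -/
def IsEquivOn {V : Type*} (T : Set V) (R : V → V → Prop) : Prop :=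
  (∀ u v, R u v → u ∈ T ∧ v ∈ T) ∧ (∀ u ∈ T, R u u) ∧
    (∀ u v, R u v → R v u) ∧ (∀ u v w, R u v → R v w → R u w)

/-- `(X, F)` is a solution to the MMCU instance `(G, T, R, k, l)`. -/
def IsSolution {V E : Type*} (G : Multigraph V E) (T : Set V) (R : V → V → Prop)
    (k l : ℕ) (X : Set V) (F : Set E) : Prop :=
  X ⊆ Tᶜ ∧ X.ncard ≤ k ∧ F.ncard ≤ l ∧
    ∀ u ∈ T, ∀ v ∈ T, (G.Conn X F u v ↔ R u v)

/-- `(X, F)` is a minimal solution to the MMCU instance `(G, T, R, k, l)`. -/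
def IsMinSolution {V E : Type*} (G : Multigraph V E) (T : Set V) (R : V → V → Prop)
    (k l : ℕ) (X : Set V) (F : Set E) : Prop :=
  IsSolution G T R k l X F ∧
    ∀ X' F', IsSolution G T R k l X' F' → X' ⊆ X → F' ⊆ F → X' = X ∧ F' = F

/-- `C` is the vertex set of a connected component of `G − Z`. -/
def IsCompOf {V E : Type*} (G : Multigraph V E) (Z : Set V) (C : Set V) : Prop :=
  ∃ v, v ∉ Z ∧ C = {w | G.Conn Z ∅ v w}

/-- `(Z, V1, V2)` is a `(q, k)`-good node separation of `G` with undeletable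
vertices `Vinf`. -/
def GoodNodeSep {V E : Type*} (G : Multigraph V E) (Vinf : Set V) (q k : ℕ)
    (Z V1 V2 : Set V) : Prop :=
  Z.ncard ≤ k ∧ Z ∩ Vinf = ∅ ∧ IsCompOf G Z V1 ∧ IsCompOf G Z V2 ∧ V1 ≠ V2 ∧
    q < (V1 \ Vinf).ncard ∧ q < (V2 \ Vinf).ncard

/-- `(Z, (P i)_{i})` is a `(q, k)`-flower separation in `G` with regard to border
terminals `Tb`, with undeletable vertices `Vinf`. -/
def FlowerSep {V E : Type*} (G : Multigraph V E) (Vinf Tb : Set V) (q k : ℕ)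
    (Z : Set V) {r : ℕ} (P : Fin r → Set V) : Prop :=
  1 ≤ Z.ncard ∧ Z.ncard ≤ k ∧ Z ∩ Vinf = ∅ ∧
    (∀ i, IsCompOf G Z (P i)) ∧ (∀ i j, i ≠ j → P i ≠ P j) ∧
    q < ((Set.univ \ (Z ∪ ⋃ i, P i)) \ Vinf).ncard ∧
    (∀ i, P i ∩ Tb = ∅ ∧ (P i \ Vinf).ncard ≤ q ∧ G.setNbhd (P i) = Z) ∧
    q < ((⋃ i, P i) \ Vinf).ncard

section Aux

open Multigraph

variable {V E : Type*} {G : Multigraph V E} {Z C C' : Set V}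

lemma step_symm {X : Set V} {F : Set E} {a b : V} (h : G.Step X F a b) : G.Step X F b a := by
  obtain ⟨ha, hb, e, he, hee⟩ := h
  exact ⟨hb, ha, e, he, by rw [hee, Sym2.eq_swap]⟩

lemma conn_refl {v : V} (hv : v ∉ Z) : G.Conn Z ∅ v v := ⟨hv, hv, .refl⟩

lemma conn_symm {u v : V} (h : G.Conn Z ∅ u v) : G.Conn Z ∅ v u :=
  ⟨h.2.1, h.1, (by haveI : Std.Symm (G.Step Z ∅) := ⟨fun _ _ h => step_symm h⟩; exact Std.Symm.symm _ _ h.2.2)⟩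

lemma conn_trans {u v w : V} (h1 : G.Conn Z ∅ u v) (h2 : G.Conn Z ∅ v w) :
    G.Conn Z ∅ u w := ⟨h1.1, h2.2.1, h1.2.2.trans h2.2.2⟩

lemma mem_comp_not_Z (hC : IsCompOf G Z C) {w : V} (hw : w ∈ C) : w ∉ Z := by
  obtain ⟨v, hv, rfl⟩ := hC; exact hw.2.1

lemma comp_nonempty (hC : IsCompOf G Z C) : C.Nonempty := by
  obtain ⟨v, hv, rfl⟩ := hC; exact ⟨v, conn_refl hv⟩

lemma comp_eq_of_mem (hC : IsCompOf G Z C) {x : V} (hx : x ∈ C) :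
    C = {w | G.Conn Z ∅ x w} := by
  obtain ⟨v, hv, rfl⟩ := hC
  ext w
  exact ⟨fun h => conn_trans (conn_symm hx) h, fun h => conn_trans hx h⟩

lemma comp_eq_comp (hC : IsCompOf G Z C) (hC' : IsCompOf G Z C') {x : V}
    (hx : x ∈ C) (hx' : x ∈ C') : C = C' := by
  rw [comp_eq_of_mem hC hx, comp_eq_of_mem hC' hx']

lemma mem_of_step (hC : IsCompOf G Z C) {x y : V} (hx : x ∈ C) (h : G.Step Z ∅ x y) :
    y ∈ C := by
  obtain ⟨v, hv, rfl⟩ := hC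
  exact ⟨hx.1, h.2.1, hx.2.2.tail h⟩

lemma nbhd_subset (hC : IsCompOf G Z C) : G.setNbhd C ⊆ Z := by
  intro u hu
  by_contra huZ
  obtain ⟨huC, d, hd, e, he⟩ := hu
  exact huC (mem_of_step hC hd
    ⟨mem_comp_not_Z hC hd, huZ, e, Set.notMem_empty e, by rw [he, Sym2.eq_swap]⟩)

lemma comp_of_setNbhd (hC : IsCompOf G Z C) : IsCompOf G (G.setNbhd C) C := by
  have hSZ : G.setNbhd C ⊆ Z := nbhd_subset hC
  obtain ⟨v, hv, hCeq⟩ := hC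
  have hC : IsCompOf G Z C := ⟨v, hv, hCeq⟩
  have hvC : v ∈ C := by rw [hCeq]; exact conn_refl hv
  refine ⟨v, fun hvS => hvS.1 hvC, ?_⟩
  ext w
  constructor
  · intro hw
    have hconn : G.Conn Z ∅ v w := by rw [hCeq] at hw; exact hw
    exact ⟨fun hvS => hvS.1 hvC, fun hwS => hwS.1 hw,
      Relation.ReflTransGen.mono (fun a b hab =>
        ⟨fun h => hab.1 (hSZ h), fun h => hab.2.1 (hSZ h), hab.2.2⟩) _ _ hconn.2.2⟩
  · rintro ⟨-, -, hp⟩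
    clear hCeq
    induction hp with
    | refl => exact hvC
    | tail _ hbc ih =>
      rename_i b c _
      obtain ⟨hbS, hcS, e, -, hee⟩ := hbc
      by_cases hcZ : c ∈ Z
      · exact absurd (⟨fun hcC => (mem_comp_not_Z hC hcC) hcZ, b, ih, e, by
          rw [hee, Sym2.eq_swap]⟩ : c ∈ G.setNbhd C) hcS
      · exact mem_of_step hC ih ⟨mem_comp_not_Z hC ih, hcZ, e, Set.notMem_empty e, hee⟩

lemma nbhd_nonempty (hconn : ∀ u v : V, G.Conn ∅ ∅ u v) (hC : IsCompOf G Z C)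
    (hZ : Z.Nonempty) : (G.setNbhd C).Nonempty := by
  obtain ⟨z, hz⟩ := hZ
  obtain ⟨v, hv, hCeq⟩ := hC
  have hC : IsCompOf G Z C := ⟨v, hv, hCeq⟩
  have hvC : v ∈ C := by rw [hCeq]; exact conn_refl hv
  have key : ∀ w : V, Relation.ReflTransGen (G.Step ∅ ∅) v w →
      w ∈ C ∨ (G.setNbhd C).Nonempty := by
    intro w hp
    induction hp with
    | refl => exact Or.inl hvC
    | tail _ hbc ih =>
      rename_i b c _
      rcases ih with hb | hne
      · obtain ⟨-, -, e, -, hee⟩ := hbc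
        by_cases hcC : c ∈ C
        · exact Or.inl hcC
        · exact Or.inr ⟨c, hcC, b, hb, e, by rw [hee, Sym2.eq_swap]⟩
      · exact Or.inr hne
  rcases key z (hconn v z).2.2 with hzC | h
  · exact absurd hz (mem_comp_not_Z hC hzC)
  · exact h

lemma ncard_le_mul_of_fibers {α β : Type*} [Finite α] [Finite β] {A : Set α} {B : Set β}
    (f : α → β) (m : ℕ) (hmap : ∀ a ∈ A, f a ∈ B)
    (hfib : ∀ b ∈ B, {a | a ∈ A ∧ f a = b}.ncard ≤ m) : A.ncard ≤ B.ncard * m := by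
  classical
  haveI := Fintype.ofFinite α
  haveI := Fintype.ofFinite β
  rw [Set.ncard_eq_toFinset_card' A, Set.ncard_eq_toFinset_card' B, mul_comm]
  refine Finset.card_le_mul_card_image_of_maps_to (f := f) ?_ m ?_
  · intro a ha
    simpa using hmap a (by simpa using ha)
  · intro b hb
    have h := hfib b (by simpa using hb)
    rw [Set.ncard_eq_toFinset_card'] at h
    refine le_trans (le_of_eq ?_) h
    congr 1
    ext a
    simp

end Aux

/-- If a connected graph `G` with undeletable vertices `V^∞` and
border terminals `T_b` contains neither a `(q, k)`-good node separation nor a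
`(q, k)`-flower separation w.r.t. `T_b`, then for every `Z ⊆ V(G) \ V^∞` with
`|Z| ≤ k`, the graph `G − Z` has at most `(2q + 2)(2^k − 1) + |T_b| + 1` connected
components containing a vertex of `V(G) \ V^∞`, of which at most one has more than
`q` vertices not in `V^∞`. -/

theorem stmt16 {V E : Type*} [Fintype V] [Fintype E]
    (G : Multigraph V E) (hG : G.Loopless)
    (Vinf Tb : Set V) (q k : ℕ)
    (hconn : ∀ u v : V, G.Conn ∅ ∅ u v)
    (hng : ¬ ∃ Z V1 V2 : Set V, GoodNodeSep G Vinf q k Z V1 V2)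
    (hnf : ¬ ∃ (Z : Set V) (r : ℕ) (P : Fin r → Set V), FlowerSep G Vinf Tb q k Z P) :
    ∀ Z : Set V, Z ⊆ Vinfᶜ → Z.ncard ≤ k →
      {C : Set V | IsCompOf G Z C ∧ ∃ x ∈ C, x ∉ Vinf}.ncard ≤
          (2 * q + 2) * (2 ^ k - 1) + Tb.ncard + 1 ∧
        {C : Set V | IsCompOf G Z C ∧ q < (C \ Vinf).ncard}.ncard ≤ 1 := by
  classical
  haveI hfinSet : Finite (Set V) := inferInstanceAs (Finite (V → Prop))
  intro Z hZVinf hZk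
  have part2 : {C : Set V | IsCompOf G Z C ∧ q < (C \ Vinf).ncard}.ncard ≤ 1 := by
    by_contra hcon
    rw [not_le] at hcon
    rw [Set.one_lt_ncard (Set.toFinite _)] at hcon
    obtain ⟨C1, hC1, C2, hC2, hne⟩ := hcon
    exact hng ⟨Z, C1, C2, hZk,
      Set.eq_empty_iff_forall_notMem.2 (fun x hx => hZVinf hx.1 hx.2),
      hC1.1, hC2.1, hne, hC1.2, hC2.2⟩
  refine ⟨?_, part2⟩
  by_cases hZe : Z = ∅
  · subst hZe
    have hone : {C : Set V | IsCompOf G ∅ C ∧ ∃ x ∈ C, x ∉ Vinf}.ncard ≤ 1 := by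
      rw [Set.ncard_le_one (Set.toFinite _)]
      rintro C ⟨hC, -⟩ C' ⟨hC', -⟩
      obtain ⟨v, -, rfl⟩ := hC
      obtain ⟨v', -, rfl⟩ := hC'
      exact comp_eq_comp ⟨v, Set.notMem_empty v, rfl⟩ ⟨v', Set.notMem_empty v', rfl⟩
        (hconn v v') (conn_refl (Set.notMem_empty v'))
    exact le_trans hone (Nat.le_add_left 1 _)
  · have hZne : Z.Nonempty := Set.nonempty_iff_ne_empty.2 hZe
    haveI : Nonempty V := ⟨hZne.choose⟩
    set g : Set V → V :=
      fun C => if h : (C \ Vinf).Nonempty then h.choose else Classical.arbitrary V with hg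
    have hgmem : ∀ {C : Set V}, (C \ Vinf).Nonempty → g C ∈ C \ Vinf := by
      intro C h
      rw [hg]
      simp only [dif_pos h]
      exact h.choose_spec
    set Sm := {C : Set V | IsCompOf G Z C ∧ (∃ x ∈ C, x ∉ Vinf) ∧ C ∩ Tb = ∅ ∧
      (C \ Vinf).ncard ≤ q} with hSmdef
    set TbS := {C : Set V | IsCompOf G Z C ∧ (C ∩ Tb).Nonempty} with hTbSdef
    set Big := {C : Set V | IsCompOf G Z C ∧ q < (C \ Vinf).ncard} with hBigdef
    have hsub : {C : Set V | IsCompOf G Z C ∧ ∃ x ∈ C, x ∉ Vinf} ⊆ Sm ∪ TbS ∪ Big := by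
      rintro C ⟨hC, hx⟩
      by_cases hq : (C \ Vinf).ncard ≤ q
      · by_cases htb : C ∩ Tb = ∅
        · exact Or.inl (Or.inl ⟨hC, hx, htb, hq⟩)
        · exact Or.inl (Or.inr ⟨hC, Set.nonempty_iff_ne_empty.2 htb⟩)
      · exact Or.inr ⟨hC, lt_of_not_ge hq⟩
    have hTbBound : TbS.ncard ≤ Tb.ncard := by
      classical
      set f : Set V → V :=
        fun C => if h : (C ∩ Tb).Nonempty then h.choose else Classical.arbitrary V with hf
      have hfmem : ∀ {C : Set V}, (C ∩ Tb).Nonempty → f C ∈ C ∩ Tb := by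
        intro C h
        rw [hf]
        simp only [dif_pos h]
        exact h.choose_spec
      refine Set.ncard_le_ncard_of_injOn f ?_ ?_ Tb.toFinite
      · rintro C ⟨hC, hCT⟩
        exact (hfmem hCT).2
      · rintro C ⟨hC, hCT⟩ C' ⟨hC', hCT'⟩ hEq
        exact comp_eq_comp hC hC' (hfmem hCT).1 (by rw [hEq]; exact (hfmem hCT').1)
    have hfiber : ∀ S ∈ {S : Set V | S ⊆ Z ∧ S.Nonempty},
        {C | C ∈ Sm ∧ G.setNbhd C = S}.ncard ≤ 2 * q + 2 := by
      rintro S ⟨hSZ, hSne⟩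
      by_contra hcon
      rw [not_le] at hcon
      set Fib := {C | C ∈ Sm ∧ G.setNbhd C = S} with hFibdef
      obtain ⟨A, hAsub, hAcard⟩ := Set.exists_subset_card_eq (n := q + 1) (s := Fib)
        (by omega)
      have hRest : q + 2 ≤ (Fib \ A).ncard := by
        rw [Set.ncard_diff hAsub A.toFinite]
        omega
      have h𝒜card : (A.toFinite.toFinset).card = q + 1 := by
        rw [← Set.ncard_eq_toFinset_card A A.toFinite]
        exact hAcard
      set e := Finset.equivFinOfCardEq h𝒜card with he
      set P : Fin (q + 1) → Set V := fun i => ((e.symm i : A.toFinite.toFinset) : Set V)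
        with hP
      have hPA : ∀ i, P i ∈ A := by
        intro i
        have h2 := (e.symm i).2
        rw [Set.Finite.mem_toFinset] at h2
        exact h2
      have hPFib : ∀ i, P i ∈ Fib := fun i => hAsub (hPA i)
      have hPcomp : ∀ i, IsCompOf G Z (P i) := fun i => (hPFib i).1.1
      have hPnbhd : ∀ i, G.setNbhd (P i) = S := fun i => (hPFib i).2
      have hPinj : ∀ i j, i ≠ j → P i ≠ P j := by
        intro i j hij hPij
        exact hij (e.symm.injective (Subtype.ext hPij))
      refine hnf ⟨S, q + 1, P, ?_, ?_, ?_, fun i => ?_, hPinj, ?_, fun i => ?_, ?_⟩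
      · exact (Set.ncard_pos S.toFinite).2 hSne
      · exact le_trans (Set.ncard_le_ncard hSZ Z.toFinite) hZk
      · exact Set.eq_empty_iff_forall_notMem.2 (fun x hx => hZVinf (hSZ hx.1) hx.2)
      · rw [← hPnbhd i]
        exact comp_of_setNbhd (hPcomp i)
      · -- stalk bound
        have hmap : ∀ C ∈ Fib \ A, g C ∈ (Set.univ \ (S ∪ ⋃ i, P i)) \ Vinf := by
          rintro C ⟨hCF, hCA⟩
          obtain ⟨hCcomp, ⟨x, hxC, hxV⟩, -, -⟩ := hCF.1
          have hgC := hgmem ⟨x, hxC, hxV⟩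
          refine ⟨⟨Set.mem_univ _, ?_⟩, hgC.2⟩
          rintro (hgS | hgU)
          · exact (mem_comp_not_Z hCcomp hgC.1) (hSZ hgS)
          · rw [Set.mem_iUnion] at hgU
            obtain ⟨i, hgPi⟩ := hgU
            have hCP : C = P i := comp_eq_comp hCcomp (hPcomp i) hgC.1 hgPi
            exact hCA (hCP ▸ hPA i)
        have hinj : Set.InjOn g (Fib \ A) := by
          rintro C ⟨hCF, -⟩ C' ⟨hCF', -⟩ hEq
          obtain ⟨hCcomp, ⟨x, hxC, hxV⟩, -, -⟩ := hCF.1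
          obtain ⟨hCcomp', ⟨x', hxC', hxV'⟩, -, -⟩ := hCF'.1
          exact comp_eq_comp hCcomp hCcomp' (hgmem ⟨x, hxC, hxV⟩).1
            (by rw [hEq]; exact (hgmem ⟨x', hxC', hxV'⟩).1)
        have hle := Set.ncard_le_ncard_of_injOn g hmap hinj (Set.toFinite _)
        omega
      · exact ⟨(hPFib i).1.2.2.1, (hPFib i).1.2.2.2, hPnbhd i⟩
      · -- petal union bound
        have hmap2 : ∀ C ∈ A, g C ∈ (⋃ i, P i) \ Vinf := by
          intro C hCA
          have hCF := hAsub hCA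
          obtain ⟨hCcomp, ⟨x, hxC, hxV⟩, -, -⟩ := hCF.1
          have hgC := hgmem ⟨x, hxC, hxV⟩
          have hCmem : C ∈ A.toFinite.toFinset := by
            rw [Set.Finite.mem_toFinset]; exact hCA
          refine ⟨Set.mem_iUnion.2 ⟨e ⟨C, hCmem⟩, ?_⟩, hgC.2⟩
          have hPC : P (e ⟨C, hCmem⟩) = C := by
            rw [hP]
            simp only [Equiv.symm_apply_apply]
          rw [hPC]
          exact hgC.1
        have hinj2 : Set.InjOn g A := by
          intro C hCA C' hCA' hEq
          obtain ⟨hCcomp, ⟨x, hxC, hxV⟩, -, -⟩ := (hAsub hCA).1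
          obtain ⟨hCcomp', ⟨x', hxC', hxV'⟩, -, -⟩ := (hAsub hCA').1
          exact comp_eq_comp hCcomp hCcomp' (hgmem ⟨x, hxC, hxV⟩).1
            (by rw [hEq]; exact (hgmem ⟨x', hxC', hxV'⟩).1)
        have hle := Set.ncard_le_ncard_of_injOn g hmap2 hinj2 (Set.toFinite _)
        omega
    have hBbound : {S : Set V | S ⊆ Z ∧ S.Nonempty}.ncard ≤ 2 ^ k - 1 := by
      have hinj : Set.InjOn (fun S : Set V => S.toFinite.toFinset)
          {S : Set V | S ⊆ Z ∧ S.Nonempty} := by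
        intro S hS S' hS' hEq
        have h := congrArg (fun t : Finset V => (t : Set V)) hEq
        simpa [Set.Finite.coe_toFinset] using h
      have hmap : ∀ S ∈ {S : Set V | S ⊆ Z ∧ S.Nonempty},
          S.toFinite.toFinset ∈
            ((Z.toFinite.toFinset.powerset.erase ∅ : Finset (Finset V)) : Set (Finset V)) := by
        rintro S ⟨hSZ, hSne⟩
        rw [Finset.mem_coe, Finset.mem_erase]
        constructor
        · obtain ⟨x, hx⟩ := hSne
          exact Finset.ne_empty_of_mem ((Set.Finite.mem_toFinset _).2 hx)
        · rw [Finset.mem_powerset]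
          intro x hx
          rw [Set.Finite.mem_toFinset] at hx ⊢
          exact hSZ hx
      have h1 := Set.ncard_le_ncard_of_injOn _ hmap hinj (Set.toFinite _)
      rw [Set.ncard_coe_finset] at h1
      have h2 : (Z.toFinite.toFinset.powerset.erase ∅).card = 2 ^ Z.ncard - 1 := by
        rw [Finset.card_erase_of_mem (Finset.empty_mem_powerset _), Finset.card_powerset,
          ← Set.ncard_eq_toFinset_card Z Z.toFinite]
      refine le_trans h1 ?_
      rw [h2]
      exact Nat.sub_le_sub_right (Nat.pow_le_pow_right (by norm_num) hZk) 1
    have hSmBound : Sm.ncard ≤ (2 * q + 2) * (2 ^ k - 1) := by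
      have h1 := ncard_le_mul_of_fibers (A := Sm) (B := {S : Set V | S ⊆ Z ∧ S.Nonempty})
        G.setNbhd (2 * q + 2)
        (fun C hC => ⟨nbhd_subset hC.1, nbhd_nonempty hconn hC.1 hZne⟩) hfiber
      calc Sm.ncard ≤ {S : Set V | S ⊆ Z ∧ S.Nonempty}.ncard * (2 * q + 2) := h1
        _ ≤ (2 ^ k - 1) * (2 * q + 2) := Nat.mul_le_mul_right _ hBbound
        _ = (2 * q + 2) * (2 ^ k - 1) := Nat.mul_comm _ _
    calc {C : Set V | IsCompOf G Z C ∧ ∃ x ∈ C, x ∉ Vinf}.ncard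
        ≤ (Sm ∪ TbS ∪ Big).ncard := Set.ncard_le_ncard hsub (Set.toFinite _)
      _ ≤ (Sm ∪ TbS).ncard + Big.ncard := Set.ncard_union_le _ _
      _ ≤ Sm.ncard + TbS.ncard + Big.ncard :=
          Nat.add_le_add_right (Set.ncard_union_le _ _) _
      _ ≤ (2 * q + 2) * (2 ^ k - 1) + Tb.ncard + 1 :=
          Nat.add_le_add (Nat.add_le_add hSmBound hTbBound) part2
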